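/- If 0 < μ ≤ μ_ℝ = π√3/2, then the infimum of E(u) = (1/2)‖u'‖_{L^2(ℝ)}² − (1/6)‖u‖_{L^6(ℝ)}⁶ over all u ∈ H^1(ℝ) with ‖u‖_{L^2(ℝ)}² = μ equals 0. -/

import Mathlib

open MeasureTheory

lemma hasDerivAt_integral_Iic (f : ℝ → ℝ) (hc : Continuous f) (hi : Integrable f) (x : ℝ) :
    HasDerivAt (fun y => ∫ z in Set.Iic y, f z) (f x) x := by
  have heq : ∀ y : ℝ, (∫ z in Set.Iic y, f z) = (∫ z in Set.Iic (0:ℝ), f z) + ∫ z in (0:ℝ)..y, f z := by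
    intro y
    have := intervalIntegral.integral_Iic_sub_Iic (f := f) (μ := volume) (a := (0:ℝ)) (b := y)
      hi.integrableOn hi.integrableOn
    linarith [this]
  have h1 : HasDerivAt (fun y => (∫ z in Set.Iic (0:ℝ), f z) + ∫ z in (0:ℝ)..y, f z) (f x) x :=
    (hc.integral_hasStrictDerivAt 0 x).hasDerivAt.const_add _
  exact h1.congr_of_eventuallyEq (Filter.Eventually.of_forall fun y => (heq y))

lemma sin_ge_aux {β θ : ℝ} (hβ0 : 0 < β) (hβ : β ≤ Real.pi / 2) (h1 : β ≤ θ)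
    (h2 : θ ≤ Real.pi - β) : Real.sin β ≤ Real.sin θ := by
  have hπ := Real.pi_pos
  rcases le_total θ (Real.pi / 2) with h | h
  · exact Real.strictMonoOn_sin.monotoneOn ⟨by linarith, by linarith⟩ ⟨by linarith, h⟩ h1
  · rw [← Real.sin_pi_sub θ]
    exact Real.strictMonoOn_sin.monotoneOn ⟨by linarith, by linarith⟩
      ⟨by linarith, by linarith⟩ (by linarith)

set_option maxHeartbeats 1000000 in
lemma gn_key (μ : ℝ) (hμ0 : 0 < μ) (u u' : ℝ → ℝ)
    (hd : ∀ x, HasDerivAt u (u' x) x)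
    (h2 : Integrable (fun x => (u x) ^ 2))
    (h2' : Integrable (fun x => (u' x) ^ 2))
    (h6 : Integrable (fun x => (u x) ^ 6))
    (hm : (∫ x, (u x) ^ 2) = μ)
    (l : ℝ) (hl : l ∈ Set.Ioo (0:ℝ) 1) :
    l ^ 2 * (∫ x, (u x) ^ 6) ≤ (4 * μ ^ 2 / Real.pi ^ 2) * ∫ x, (u' x) ^ 2 := by
  obtain ⟨hl0, hl1⟩ := hl
  have hπ := Real.pi_pos
  have hu_cont : Continuous u := continuous_iff_continuousAt.2 fun x => (hd x).continuousAt
  have hu'_eq : u' = deriv u := funext fun x => ((hd x).deriv).symm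
  have hu'_meas : Measurable u' := hu'_eq ▸ measurable_deriv u
  -- u^4 integrable
  have h4 : Integrable (fun x => (u x) ^ 4) := by
    refine Integrable.mono' (h2.add h6) ((hu_cont.pow 4).aestronglyMeasurable) ?_
    filter_upwards with x
    rw [Real.norm_eq_abs, abs_of_nonneg (by positivity)]
    simp only [Pi.add_apply]
    nlinarith [sq_nonneg (u x ^ 2 - 1), sq_nonneg (u x)]
  -- u^3 * u' integrable
  have h31 : Integrable (fun x => (u x) ^ 3 * u' x) := by
    refine Integrable.mono' ((h6.add h2').const_mul (1/2))
      (((hu_cont.pow 3).measurable.mul hu'_meas).aestronglyMeasurable) ?_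
    filter_upwards with x
    rw [Real.norm_eq_abs, abs_mul]
    simp only [Pi.add_apply]
    nlinarith [sq_nonneg (|u x ^ 3| - |u' x|), sq_abs (u x ^ 3), sq_abs (u' x)]
  -- the transplanted variable t
  set t : ℝ → ℝ := fun x => (Real.pi / μ) * ∫ y in Set.Iic x, (u y) ^ 2 with htdef
  have ht : ∀ x, HasDerivAt t ((Real.pi / μ) * (u x) ^ 2) x := fun x =>
    (hasDerivAt_integral_Iic _ (hu_cont.pow 2) h2 x).const_mul _
  have ht_cont : Continuous t := continuous_iff_continuousAt.2 fun x => (ht x).continuousAt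
  have ht_mem : ∀ x, t x ∈ Set.Icc 0 Real.pi := by
    intro x
    have h0 : 0 ≤ ∫ y in Set.Iic x, (u y) ^ 2 :=
      setIntegral_nonneg measurableSet_Iic fun y _ => by positivity
    have h1 : (∫ y in Set.Iic x, (u y) ^ 2) ≤ μ := by
      rw [← hm]
      exact setIntegral_le_integral h2 (Filter.Eventually.of_forall fun y => by positivity)
    constructor
    · simp only [htdef]
      exact mul_nonneg (by positivity) h0
    · simp only [htdef]
      calc (Real.pi / μ) * ∫ y in Set.Iic x, (u y) ^ 2 ≤ (Real.pi / μ) * μ := by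
            apply mul_le_mul_of_nonneg_left h1 (by positivity)
        _ = Real.pi := by field_simp
  -- setup for fixed l
  set β : ℝ := (1 - l) * Real.pi / 2 with hβdef
  have hβ0 : 0 < β := by rw [hβdef]; nlinarith
  have hβ2 : β ≤ Real.pi / 2 := by rw [hβdef]; nlinarith
  set θ : ℝ → ℝ := fun x => l * t x + β with hθdef
  have hθ_mem : ∀ x, β ≤ θ x ∧ θ x ≤ Real.pi - β := by
    intro x
    obtain ⟨ha, hb⟩ := ht_mem x
    constructor
    · simp only [hθdef]; nlinarith
    · simp only [hθdef, hβdef]; nlinarith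
  have hsβ : 0 < Real.sin β := Real.sin_pos_of_pos_of_lt_pi hβ0 (by linarith)
  have hsθ : ∀ x, Real.sin β ≤ Real.sin (θ x) := fun x =>
    sin_ge_aux hβ0 hβ2 (hθ_mem x).1 (hθ_mem x).2
  have hsθ0 : ∀ x, Real.sin (θ x) ≠ 0 := fun x => (lt_of_lt_of_le hsβ (hsθ x)).ne'
  set c : ℝ → ℝ := fun x => l * Real.cos (θ x) / Real.sin (θ x) with hcdef
  have hθd : ∀ x, HasDerivAt θ (l * ((Real.pi / μ) * (u x) ^ 2)) x := fun x =>
    ((ht x).const_mul l).add_const β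
  have hθ_cont : Continuous θ := by
    simp only [hθdef]
    exact (continuous_const.mul ht_cont).add continuous_const
  have hc_cont : Continuous c := by
    simp only [hcdef]
    apply Continuous.div
    · exact continuous_const.mul (Real.continuous_cos.comp hθ_cont)
    · exact Real.continuous_sin.comp hθ_cont
    · exact hsθ0
  have hc_bdd : ∀ x, |c x| ≤ 1 / Real.sin β := by
    intro x
    rw [hcdef, abs_div]
    rw [abs_of_pos (lt_of_lt_of_le hsβ (hsθ x))]
    apply div_le_div₀ (by positivity) ?_ hsβ (hsθ x)
    calc |l * Real.cos (θ x)| = l * |Real.cos (θ x)| := by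
          rw [abs_mul, abs_of_pos hl0]
      _ ≤ 1 * 1 := by
          apply mul_le_mul hl1.le (Real.abs_cos_le_one _) (abs_nonneg _) zero_le_one
      _ = 1 := one_mul 1
  have hcd : ∀ x, HasDerivAt c (-(l ^ 2 + (c x) ^ 2) * ((Real.pi / μ) * (u x) ^ 2)) x := by
    intro x
    have hcos : HasDerivAt (fun y => Real.cos (θ y))
        (-Real.sin (θ x) * (l * ((Real.pi / μ) * (u x) ^ 2))) x :=
      (Real.hasDerivAt_cos (θ x)).comp x (hθd x)
    have hsin : HasDerivAt (fun y => Real.sin (θ y))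
        (Real.cos (θ x) * (l * ((Real.pi / μ) * (u x) ^ 2))) x :=
      (Real.hasDerivAt_sin (θ x)).comp x (hθd x)
    have hdiv := ((hcos.const_mul l).div hsin (hsθ0 x))
    refine hdiv.congr_deriv ?_
    have hpy := Real.sin_sq_add_cos_sq (θ x)
    have hs := hsθ0 x
    simp only [hcdef]
    generalize Real.sin (θ x) = sn at hpy hs ⊢
    generalize Real.cos (θ x) = co at hpy ⊢
    generalize (Real.pi / μ) * (u x) ^ 2 = D
    field_simp
    ring_nf
  -- define G and its derivative
  set G : ℝ → ℝ := fun x => (u x) ^ 4 * c x with hGdef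
  set G' : ℝ → ℝ := fun x =>
    4 * ((u x) ^ 3 * u' x * c x) - (Real.pi / μ) * (l ^ 2 * (u x) ^ 6 + (u x) ^ 6 * (c x) ^ 2)
    with hG'def
  have hGd : ∀ x, HasDerivAt G (G' x) x := by
    intro x
    have h1 : HasDerivAt (fun y => (u y) ^ 4) (4 * (u x) ^ 3 * u' x) x := by
      exact ((hd x).pow 4).congr_deriv (by norm_num)
    have := h1.mul (hcd x)
    refine this.congr_deriv ?_
    rw [hG'def]
    ring
  -- integrability of G and G'
  have hu6c2 : Integrable (fun x => (u x) ^ 6 * (c x) ^ 2) := by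
    refine Integrable.mono' (h6.const_mul ((1 / Real.sin β) ^ 2))
      (((hu_cont.pow 6).mul (hc_cont.pow 2)).aestronglyMeasurable) ?_
    filter_upwards with x
    rw [Real.norm_eq_abs, abs_of_nonneg (by positivity)]
    have h := hc_bdd x
    have : (c x) ^ 2 ≤ (1 / Real.sin β) ^ 2 := by
      rw [← sq_abs]
      exact pow_le_pow_left₀ (abs_nonneg _) h 2
    calc (u x) ^ 6 * (c x) ^ 2 ≤ (u x) ^ 6 * (1 / Real.sin β) ^ 2 := by
          apply mul_le_mul_of_nonneg_left this (by positivity)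
      _ = (1 / Real.sin β) ^ 2 * (u x) ^ 6 := by ring
  have h31c : Integrable (fun x => (u x) ^ 3 * u' x * c x) := by
    refine Integrable.mono' (h31.abs.const_mul (1 / Real.sin β))
      ((((hu_cont.pow 3).measurable.mul hu'_meas).mul hc_cont.measurable).aestronglyMeasurable) ?_
    filter_upwards with x
    rw [Real.norm_eq_abs, abs_mul]
    rw [mul_comm (1 / Real.sin β) _]
    exact mul_le_mul_of_nonneg_left (hc_bdd x) (abs_nonneg _)
  have hGint : Integrable G := by
    refine Integrable.mono' (h4.const_mul (1 / Real.sin β))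
      ((hu_cont.pow 4).mul hc_cont).aestronglyMeasurable ?_
    filter_upwards with x
    rw [Real.norm_eq_abs, hGdef, abs_mul, abs_of_nonneg (a := (u x)^4) (by positivity),
      mul_comm (1 / Real.sin β) _]
    exact mul_le_mul_of_nonneg_left (hc_bdd x) (by positivity)
  have hG'int : Integrable G' := by
    rw [hG'def]
    exact ((h31c.const_mul 4).sub (((h6.const_mul (l^2)).add hu6c2).const_mul (Real.pi / μ)))
  -- FTC: integral of G' is zero
  have hFTC : (∫ x, G' x) = 0 :=
    integral_eq_zero_of_hasDerivAt_of_integrable hGd hG'int hGint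
  -- expand the FTC identity
  set I6 : ℝ := ∫ x, (u x) ^ 6 with hI6
  set K : ℝ := ∫ x, (u' x) ^ 2 with hK
  set J : ℝ := ∫ x, (u x) ^ 6 * (c x) ^ 2 with hJ
  set L : ℝ := ∫ x, (u x) ^ 3 * u' x * c x with hL
  have hA1 : Integrable (fun x => 4 * ((u x) ^ 3 * u' x * c x)) := h31c.const_mul 4
  have hA2 : Integrable (fun x => l ^ 2 * (u x) ^ 6) := h6.const_mul _
  have hA3 : Integrable (fun x => l ^ 2 * (u x) ^ 6 + (u x) ^ 6 * (c x) ^ 2) := hA2.add hu6c2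
  have hA4 : Integrable (fun x => (Real.pi / μ) * (l ^ 2 * (u x) ^ 6 + (u x) ^ 6 * (c x) ^ 2)) :=
    hA3.const_mul _
  have hexpand : (∫ x, G' x) = 4 * L - (Real.pi / μ) * (l ^ 2 * I6 + J) := by
    have : (∫ x, G' x) = ∫ x, (4 * ((u x) ^ 3 * u' x * c x)
        - (Real.pi / μ) * (l ^ 2 * (u x) ^ 6 + (u x) ^ 6 * (c x) ^ 2)) := rfl
    rw [this, integral_sub hA1 hA4, integral_const_mul, integral_const_mul,
      integral_add hA2 hu6c2, integral_const_mul]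
  have hiden : 4 * L = (Real.pi / μ) * (l ^ 2 * I6 + J) := by
    have := hFTC
    rw [hexpand] at this
    linarith
  -- pointwise AM-GM and its integral
  have hpoint : ∀ x, 0 ≤ 4 * (μ / Real.pi) * (u' x) ^ 2
      + (Real.pi / μ) * ((u x) ^ 6 * (c x) ^ 2) - 4 * ((u x) ^ 3 * u' x * c x) := by
    intro x
    have h1 : 0 < μ / Real.pi := by positivity
    have h2 : (Real.pi / μ) * (μ / Real.pi) = 1 := by field_simp
    nlinarith [sq_nonneg (2 * (μ / Real.pi) * u' x - (u x) ^ 3 * c x), h1,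
      sq_nonneg (u' x), sq_nonneg ((u x)^3 * c x)]
  have hPint : Integrable (fun x => 4 * (μ / Real.pi) * (u' x) ^ 2
      + (Real.pi / μ) * ((u x) ^ 6 * (c x) ^ 2) - 4 * ((u x) ^ 3 * u' x * c x)) :=
    ((h2'.const_mul _).add (hu6c2.const_mul _)).sub (h31c.const_mul 4)
  have hInonneg : 0 ≤ ∫ x, (4 * (μ / Real.pi) * (u' x) ^ 2
      + (Real.pi / μ) * ((u x) ^ 6 * (c x) ^ 2) - 4 * ((u x) ^ 3 * u' x * c x)) :=
    integral_nonneg hpoint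
  have hB1 : Integrable (fun x => 4 * (μ / Real.pi) * (u' x) ^ 2) := h2'.const_mul _
  have hB2 : Integrable (fun x => (Real.pi / μ) * ((u x) ^ 6 * (c x) ^ 2)) := hu6c2.const_mul _
  have hB3 : Integrable (fun x => 4 * (μ / Real.pi) * (u' x) ^ 2
      + (Real.pi / μ) * ((u x) ^ 6 * (c x) ^ 2)) := hB1.add hB2
  have hIexpand : (∫ x, (4 * (μ / Real.pi) * (u' x) ^ 2
      + (Real.pi / μ) * ((u x) ^ 6 * (c x) ^ 2) - 4 * ((u x) ^ 3 * u' x * c x)))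
      = 4 * (μ / Real.pi) * K + (Real.pi / μ) * J - 4 * L := by
    rw [integral_sub hB3 hA1, integral_add hB1 hB2, integral_const_mul, integral_const_mul,
      integral_const_mul]
  rw [hIexpand] at hInonneg
  -- conclude
  have hfinal : (Real.pi / μ) * (l ^ 2 * I6) ≤ 4 * (μ / Real.pi) * K := by nlinarith
  have hμπ : (μ / Real.pi) * (Real.pi / μ) = 1 := by field_simp
  have hππ : (μ / Real.pi) * (μ / Real.pi) = μ ^ 2 / Real.pi ^ 2 := by
    rw [div_mul_div_comm]; ring_nf
  have h1 : 0 < μ / Real.pi := by positivity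
  have h2a := mul_le_mul_of_nonneg_left hfinal h1.le
  have hμne : μ ≠ 0 := hμ0.ne'
  have hπne : Real.pi ≠ 0 := hπ.ne'
  have h3a : μ / Real.pi * (Real.pi / μ * (l ^ 2 * I6)) = l ^ 2 * I6 := by
    field_simp
  have h4a : μ / Real.pi * (4 * (μ / Real.pi) * K) = 4 * μ ^ 2 / Real.pi ^ 2 * K := by
    field_simp
  rw [h3a, h4a] at h2a
  exact h2a


lemma gauss_sq_rw (a l : ℝ) (n : ℕ) (x : ℝ) :
    (a * Real.exp (-l * x ^ 2)) ^ n = a ^ n * Real.exp (-(n * l) * x ^ 2) := by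
  rw [mul_pow, ← Real.exp_nat_mul]; ring_nf

lemma part2 (μ : ℝ) (hμ0 : 0 < μ) (ε : ℝ) (hε : 0 < ε) :
    ∃ u u' : ℝ → ℝ,
      (∀ x, HasDerivAt u (u' x) x) ∧
      Integrable (fun x => (u x) ^ 2) ∧
      Integrable (fun x => (u' x) ^ 2) ∧
      Integrable (fun x => (u x) ^ 6) ∧
      (∫ x, (u x) ^ 2) = μ ∧
      (1/2) * (∫ x, (u' x) ^ 2) - (1/6) * (∫ x, (u x) ^ 6) < ε := by
  have hπ := Real.pi_pos
  set l : ℝ := ε / (4 * μ) with hldef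
  have hl : 0 < l := by positivity
  set a : ℝ := Real.sqrt (μ * Real.sqrt (2 * l / Real.pi)) with hadef
  have hsq : 0 ≤ μ * Real.sqrt (2 * l / Real.pi) := by positivity
  have ha2 : a ^ 2 = μ * Real.sqrt (2 * l / Real.pi) := Real.sq_sqrt hsq
  have ha0 : 0 ≤ a := Real.sqrt_nonneg _
  refine ⟨fun x => a * Real.exp (-l * x ^ 2),
    fun x => a * (Real.exp (-l * x ^ 2) * (-l * (2 * x))), ?_, ?_, ?_, ?_, ?_, ?_⟩
  · intro x
    have h1 : HasDerivAt (fun x : ℝ => -l * x ^ 2) (-l * (2 * x)) x := by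
      simpa using (hasDerivAt_pow 2 x).const_mul (-l)
    exact ((Real.hasDerivAt_exp _).comp x h1).const_mul a
  · have := (integrable_exp_neg_mul_sq (b := 2 * l) (by positivity)).const_mul (a ^ 2)
    refine this.congr ?_
    filter_upwards with x
    rw [gauss_sq_rw]; norm_num
  · -- u'^2 integrable: bound by (4*a^2*l) * exp (-l * x^2)
    have key : ∀ x : ℝ, (a * (Real.exp (-l * x ^ 2) * (-l * (2 * x)))) ^ 2
        ≤ 4 * a ^ 2 * l * Real.exp (-l * x ^ 2) := by
      intro x
      have h1 : l * x ^ 2 ≤ Real.exp (l * x ^ 2) := by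
        linarith [Real.add_one_le_exp (l * x ^ 2)]
      have hE : Real.exp (-l * x ^ 2) * Real.exp (-l * x ^ 2) * Real.exp (l * x ^ 2)
          = Real.exp (-l * x ^ 2) := by
        rw [← Real.exp_add, ← Real.exp_add]; congr 1; ring
      have hEp : (0:ℝ) < Real.exp (-l * x ^ 2) := Real.exp_pos _
      have hEp2 : (0:ℝ) < Real.exp (l * x ^ 2) := Real.exp_pos _
      have h2 : l * x ^ 2 * (Real.exp (-l * x ^ 2) * Real.exp (-l * x ^ 2))
          ≤ Real.exp (-l * x ^ 2) := by
        calc l * x ^ 2 * (Real.exp (-l * x ^ 2) * Real.exp (-l * x ^ 2))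
            ≤ Real.exp (l * x ^ 2) * (Real.exp (-l * x ^ 2) * Real.exp (-l * x ^ 2)) := by
              apply mul_le_mul_of_nonneg_right h1 (by positivity)
          _ = Real.exp (-l * x ^ 2) := by linear_combination hE
      nlinarith [sq_nonneg a, hl, sq_nonneg x, mul_le_mul_of_nonneg_left h2 (by positivity : (0:ℝ) ≤ 4 * a ^ 2 * l)]
    refine Integrable.mono' ((integrable_exp_neg_mul_sq hl).const_mul (4 * a ^ 2 * l)) ?_ ?_
    · apply Continuous.aestronglyMeasurable; fun_prop
    · filter_upwards with x
      rw [Real.norm_eq_abs, abs_of_nonneg (sq_nonneg _)]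
      exact key x
  · have := (integrable_exp_neg_mul_sq (b := 6 * l) (by positivity)).const_mul (a ^ 6)
    refine this.congr ?_
    filter_upwards with x
    rw [gauss_sq_rw]; norm_num
  · have h1 : (∫ x : ℝ, (a * Real.exp (-l * x ^ 2)) ^ 2)
        = a ^ 2 * ∫ x : ℝ, Real.exp (-(2 * l) * x ^ 2) := by
      rw [← integral_const_mul]
      congr 1; funext x; rw [gauss_sq_rw]; norm_num
    rw [h1, integral_gaussian, ha2]
    rw [mul_assoc, ← Real.sqrt_mul (by positivity)]
    have : 2 * l / Real.pi * (Real.pi / (2 * l)) = 1 := by field_simp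
    rw [this, Real.sqrt_one, mul_one]
  · -- energy bound
    have h6nn : 0 ≤ ∫ x : ℝ, (a * Real.exp (-l * x ^ 2)) ^ 6 :=
      integral_nonneg fun x => by positivity
    have key : ∀ x : ℝ, (a * (Real.exp (-l * x ^ 2) * (-l * (2 * x)))) ^ 2
        ≤ 4 * a ^ 2 * l * Real.exp (-l * x ^ 2) := by
      intro x
      have h1 : l * x ^ 2 ≤ Real.exp (l * x ^ 2) := by
        linarith [Real.add_one_le_exp (l * x ^ 2)]
      have hE : Real.exp (-l * x ^ 2) * Real.exp (-l * x ^ 2) * Real.exp (l * x ^ 2)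
          = Real.exp (-l * x ^ 2) := by
        rw [← Real.exp_add, ← Real.exp_add]; congr 1; ring
      have h2 : l * x ^ 2 * (Real.exp (-l * x ^ 2) * Real.exp (-l * x ^ 2))
          ≤ Real.exp (-l * x ^ 2) := by
        calc l * x ^ 2 * (Real.exp (-l * x ^ 2) * Real.exp (-l * x ^ 2))
            ≤ Real.exp (l * x ^ 2) * (Real.exp (-l * x ^ 2) * Real.exp (-l * x ^ 2)) := by
              apply mul_le_mul_of_nonneg_right h1 (by positivity)
          _ = Real.exp (-l * x ^ 2) := by linear_combination hE
      nlinarith [mul_le_mul_of_nonneg_left h2 (by positivity : (0:ℝ) ≤ 4 * a ^ 2 * l)]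
    have hint2' : Integrable (fun x : ℝ => (a * (Real.exp (-l * x ^ 2) * (-l * (2 * x)))) ^ 2) := by
      refine Integrable.mono' ((integrable_exp_neg_mul_sq hl).const_mul (4 * a ^ 2 * l)) ?_ ?_
      · apply Continuous.aestronglyMeasurable; fun_prop
      · filter_upwards with x
        rw [Real.norm_eq_abs, abs_of_nonneg (sq_nonneg _)]
        exact key x
    have hmono : (∫ x : ℝ, (a * (Real.exp (-l * x ^ 2) * (-l * (2 * x)))) ^ 2)
        ≤ ∫ x : ℝ, 4 * a ^ 2 * l * Real.exp (-l * x ^ 2) :=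
      integral_mono hint2' ((integrable_exp_neg_mul_sq hl).const_mul _) key
    have hval : (∫ x : ℝ, 4 * a ^ 2 * l * Real.exp (-l * x ^ 2))
        = 4 * a ^ 2 * l * Real.sqrt (Real.pi / l) := by
      rw [integral_const_mul, integral_gaussian]
    have hs : Real.sqrt (2 * l / Real.pi) * Real.sqrt (Real.pi / l) = Real.sqrt 2 := by
      rw [← Real.sqrt_mul (by positivity)]
      congr 1
      field_simp
    have hbound : 4 * a ^ 2 * l * Real.sqrt (Real.pi / l) = 4 * Real.sqrt 2 * l * μ := by
      rw [ha2]
      linear_combination (4 * l * μ) * hs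
    have hsqrt2 : Real.sqrt 2 < 2 := by
      nlinarith [Real.sq_sqrt (by norm_num : (0:ℝ) ≤ 2), Real.sqrt_nonneg 2]
    have hle : (∫ x : ℝ, (a * (Real.exp (-l * x ^ 2) * (-l * (2 * x)))) ^ 2)
        ≤ 4 * Real.sqrt 2 * l * μ := by rw [← hbound, ← hval]; exact hmono
    have hlμ : l * μ = ε / 4 := by
      rw [hldef]; field_simp
    nlinarith [hε, hsqrt2, h6nn]


lemma limit_aux {A B : ℝ} (hA : 0 ≤ A)
    (h : ∀ l : ℝ, l ∈ Set.Ioo (0:ℝ) 1 → l ^ 2 * A ≤ B) : A ≤ B := by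
  by_contra hc
  push_neg at hc
  have hB : 0 ≤ B := le_trans (by nlinarith [h (1/2) (by norm_num)]) (h (1/2) (by norm_num))
  have hA0 : 0 < A := lt_of_le_of_lt hB hc
  set l : ℝ := Real.sqrt ((B + A) / (2 * A)) with hldef
  have harg0 : 0 < (B + A) / (2 * A) := by positivity
  have harg1 : (B + A) / (2 * A) < 1 := by
    rw [div_lt_one (by positivity)]; linarith
  have hl0 : 0 < l := Real.sqrt_pos.2 harg0
  have hl1 : l < 1 := by
    rw [hldef]
    calc Real.sqrt ((B + A) / (2 * A)) < Real.sqrt 1 := Real.sqrt_lt_sqrt harg0.le harg1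
      _ = 1 := Real.sqrt_one
  have hl2 : l ^ 2 = (B + A) / (2 * A) := Real.sq_sqrt harg0.le
  have := h l ⟨hl0, hl1⟩
  rw [hl2, div_mul_eq_mul_div, mul_comm] at this
  have : A * (B + A) ≤ B * (2 * A) := by
    rwa [div_le_iff₀ (by positivity)] at this
  nlinarith

/-- If `0 < μ ≤ μ_ℝ = π√3/2`, the infimum of the quintic NLS energy over
`H¹(ℝ)` functions of mass `μ` equals `0`. -/
theorem stmt_7 (μ : ℝ) (hμ0 : 0 < μ) (hμ : μ ≤ Real.pi * Real.sqrt 3 / 2) :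
    (∀ u u' : ℝ → ℝ,
      (∀ x, HasDerivAt u (u' x) x) →
      Integrable (fun x => (u x) ^ 2) →
      Integrable (fun x => (u' x) ^ 2) →
      Integrable (fun x => (u x) ^ 6) →
      (∫ x, (u x) ^ 2) = μ →
      0 ≤ (1/2) * (∫ x, (u' x) ^ 2) - (1/6) * ∫ x, (u x) ^ 6) ∧
    (∀ ε : ℝ, 0 < ε → ∃ u u' : ℝ → ℝ,
      (∀ x, HasDerivAt u (u' x) x) ∧
      Integrable (fun x => (u x) ^ 2) ∧
      Integrable (fun x => (u' x) ^ 2) ∧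
      Integrable (fun x => (u x) ^ 6) ∧
      (∫ x, (u x) ^ 2) = μ ∧
      (1/2) * (∫ x, (u' x) ^ 2) - (1/6) * (∫ x, (u x) ^ 6) < ε) := by
  constructor
  · intro u u' hd h2 h2' h6 hm
    have hGN : (∫ x, (u x) ^ 6) ≤ (4 * μ ^ 2 / Real.pi ^ 2) * ∫ x, (u' x) ^ 2 :=
      limit_aux (integral_nonneg fun x => by positivity)
        (fun l hl => gn_key μ hμ0 u u' hd h2 h2' h6 hm l hl)
    have hK : 0 ≤ ∫ x, (u' x) ^ 2 := integral_nonneg fun x => by positivity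
    have h3 : Real.sqrt 3 ^ 2 = 3 := Real.sq_sqrt (by norm_num)
    have hμ2 : μ ^ 2 ≤ 3 * Real.pi ^ 2 / 4 := by
      nlinarith [mul_self_le_mul_self hμ0.le hμ, Real.pi_pos, Real.sqrt_nonneg 3]
    have hconst : 4 * μ ^ 2 / Real.pi ^ 2 ≤ 3 := by
      rw [div_le_iff₀ (by positivity : (0:ℝ) < Real.pi ^ 2)]
      nlinarith [Real.pi_pos]
    have := mul_le_mul_of_nonneg_right hconst hK
    linarith [hGN]
  · intro ε hε
    exact part2 μ hμ0 ε hε
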